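/- Define f₀, f₁, f₂ : ℂ² → ℂ³ by f₀(z,w) = (z², √2·zw, w²), f₁(z,w) = (−√2·z·conj w, z·conj z − w·conj w, √2·w·conj z), f₂(z,w) = ((conj w)², −√2·conj z·conj w, (conj z)²). For p = (z,w) ∈ ℂ² set v₁ = (iz, iw), v₂ = (−conj w, conj z), v₃ = (−i·conj w, i·conj z). Then for every p ∈ ℂ²: Df₀(p)[v₁] = 2i·f₀(p), Df₀(p)[v₂] = √2·f₁(p), Df₀(p)[v₃] = √2·i·f₁(p); Df₁(p)[v₁] = 0, Df₁(p)[v₂] = √2·(f₂(p) − f₀(p)), Df₁(p)[v₃] = √2·i·(f₂(p) + f₀(p)); Df₂(p)[v₁] = −2i·f₂(p), Df₂(p)[v₂] = −√2·f₁(p), Df₂(p)[v₃] = √2·i·f₁(p). -/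

import Mathlib

open Matrix

/-- An element of `ℂ³` given by coordinates. -/
noncomputable def vecE3 (a b c : ℂ) : EuclideanSpace ℂ (Fin 3) :=
  (WithLp.equiv 2 (Fin 3 → ℂ)).symm ![a, b, c]

/-- `f₀(z,w) = (z², √2 zw, w²)`. -/
noncomputable def f₀ (p : ℂ × ℂ) : EuclideanSpace ℂ (Fin 3) :=
  vecE3 (p.1 ^ 2) ((Real.sqrt 2 : ℂ) * p.1 * p.2) (p.2 ^ 2)

/-- `f₁(z,w) = (−√2 z w̄, z z̄ − w w̄, √2 w z̄)`. -/
noncomputable def f₁ (p : ℂ × ℂ) : EuclideanSpace ℂ (Fin 3) :=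
  vecE3 (-((Real.sqrt 2 : ℂ) * p.1 * (starRingEnd ℂ) p.2))
    (p.1 * (starRingEnd ℂ) p.1 - p.2 * (starRingEnd ℂ) p.2)
    ((Real.sqrt 2 : ℂ) * p.2 * (starRingEnd ℂ) p.1)

/-- `f₂(z,w) = (w̄², −√2 z̄ w̄, z̄²)`. -/
noncomputable def f₂ (p : ℂ × ℂ) : EuclideanSpace ℂ (Fin 3) :=
  vecE3 (((starRingEnd ℂ) p.2) ^ 2)
    (-((Real.sqrt 2 : ℂ) * (starRingEnd ℂ) p.1 * (starRingEnd ℂ) p.2))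
    (((starRingEnd ℂ) p.1) ^ 2)

/-- `WithLp.equiv` symm as a continuous `ℝ`-linear equivalence onto `ℂ³`. -/
noncomputable def eE3 : (Fin 3 → ℂ) ≃L[ℝ] EuclideanSpace ℂ (Fin 3) :=
  (PiLp.continuousLinearEquiv 2 ℝ (fun _ : Fin 3 => ℂ)).symm

lemma hasFDerivAt_vecE3 {a b c : ℂ × ℂ → ℂ} {a' b' c' : (ℂ × ℂ) →L[ℝ] ℂ} {p : ℂ × ℂ}
    (ha : HasFDerivAt a a' p) (hb : HasFDerivAt b b' p) (hc : HasFDerivAt c c' p) :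
    HasFDerivAt (fun q => vecE3 (a q) (b q) (c q))
      ((eE3 : (Fin 3 → ℂ) →L[ℝ] EuclideanSpace ℂ (Fin 3)).comp
        (ContinuousLinearMap.pi ![a', b', c'])) p := by
  have h0 : (fun q => vecE3 (a q) (b q) (c q)) = ⇑eE3 ∘ (fun q => ![a q, b q, c q]) := rfl
  rw [h0, eE3.comp_hasFDerivAt_iff, hasFDerivAt_pi']
  intro i
  fin_cases i
  · simpa using ha
  · simpa using hb
  · simpa using hc

lemma pi3_apply {a' b' c' : (ℂ × ℂ) →L[ℝ] ℂ} (v : ℂ × ℂ) :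
    ((eE3 : (Fin 3 → ℂ) →L[ℝ] EuclideanSpace ℂ (Fin 3)).comp
        (ContinuousLinearMap.pi ![a', b', c'])) v = vecE3 (a' v) (b' v) (c' v) := by
  have h : (⇑eE3) = fun x : Fin 3 → ℂ => (WithLp.equiv 2 (Fin 3 → ℂ)).symm x := rfl
  show eE3 _ = _
  rw [h]
  show (WithLp.equiv 2 (Fin 3 → ℂ)).symm _ = _
  unfold vecE3
  congr 1
  funext i
  fin_cases i <;> rfl

lemma smul_vecE3 (r a b c : ℂ) : r • vecE3 a b c = vecE3 (r*a) (r*b) (r*c) := by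
  ext i; fin_cases i <;> simp [vecE3]
lemma add_vecE3 (a b c a' b' c' : ℂ) :
    vecE3 a b c + vecE3 a' b' c' = vecE3 (a+a') (b+b') (c+c') := by
  ext i; fin_cases i <;> simp [vecE3]
lemma sub_vecE3 (a b c a' b' c' : ℂ) :
    vecE3 a b c - vecE3 a' b' c' = vecE3 (a-a') (b-b') (c-c') := by
  ext i; fin_cases i <;> simp [vecE3]
lemma zero_vecE3 : vecE3 0 0 0 = 0 := by
  ext i; fin_cases i <;> simp [vecE3]
lemma vecE3_congr {a b c a' b' c' : ℂ} (h1 : a = a') (h2 : b = b') (h3 : c = c') :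
    vecE3 a b c = vecE3 a' b' c' := by rw [h1, h2, h3]

set_option maxHeartbeats 2000000 in
/-- Derivative formulas for `f₀, f₁, f₂` along the left-invariant
directions `v₁ = (iz, iw)`, `v₂ = (−w̄, z̄)`, `v₃ = (−i w̄, i z̄)`. -/
theorem f_frame_derivatives (p : ℂ × ℂ) :
    (fderiv ℝ f₀ p (Complex.I * p.1, Complex.I * p.2) = (2 * Complex.I) • f₀ p ∧
     fderiv ℝ f₀ p (-(starRingEnd ℂ) p.2, (starRingEnd ℂ) p.1)
       = (Real.sqrt 2 : ℂ) • f₁ p ∧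
     fderiv ℝ f₀ p (-(Complex.I * (starRingEnd ℂ) p.2), Complex.I * (starRingEnd ℂ) p.1)
       = ((Real.sqrt 2 : ℂ) * Complex.I) • f₁ p) ∧
    (fderiv ℝ f₁ p (Complex.I * p.1, Complex.I * p.2) = 0 ∧
     fderiv ℝ f₁ p (-(starRingEnd ℂ) p.2, (starRingEnd ℂ) p.1)
       = (Real.sqrt 2 : ℂ) • (f₂ p - f₀ p) ∧
     fderiv ℝ f₁ p (-(Complex.I * (starRingEnd ℂ) p.2), Complex.I * (starRingEnd ℂ) p.1)
       = ((Real.sqrt 2 : ℂ) * Complex.I) • (f₂ p + f₀ p)) ∧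
    (fderiv ℝ f₂ p (Complex.I * p.1, Complex.I * p.2) = (-(2 * Complex.I)) • f₂ p ∧
     fderiv ℝ f₂ p (-(starRingEnd ℂ) p.2, (starRingEnd ℂ) p.1)
       = (-(Real.sqrt 2 : ℂ)) • f₁ p ∧
     fderiv ℝ f₂ p (-(Complex.I * (starRingEnd ℂ) p.2), Complex.I * (starRingEnd ℂ) p.1)
       = ((Real.sqrt 2 : ℂ) * Complex.I) • f₁ p) := by
  have h2 : ((Real.sqrt 2 : ℝ) : ℂ) ^ 2 = 2 := by
    rw [← Complex.ofReal_pow, Real.sq_sqrt] <;> norm_num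
  have hz : HasFDerivAt (fun q : ℂ × ℂ => q.1) (ContinuousLinearMap.fst ℝ ℂ ℂ) p :=
    hasFDerivAt_fst
  have hw : HasFDerivAt (fun q : ℂ × ℂ => q.2) (ContinuousLinearMap.snd ℝ ℂ ℂ) p :=
    hasFDerivAt_snd
  have hcz : HasFDerivAt (fun q : ℂ × ℂ => (starRingEnd ℂ) q.1)
      ((Complex.conjCLE : ℂ →L[ℝ] ℂ).comp (ContinuousLinearMap.fst ℝ ℂ ℂ)) p :=
    (Complex.conjCLE.toContinuousLinearMap.hasFDerivAt).comp p hz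
  have hcw : HasFDerivAt (fun q : ℂ × ℂ => (starRingEnd ℂ) q.2)
      ((Complex.conjCLE : ℂ →L[ℝ] ℂ).comp (ContinuousLinearMap.snd ℝ ℂ ℂ)) p :=
    (Complex.conjCLE.toContinuousLinearMap.hasFDerivAt).comp p hw
  have hz2 : HasFDerivAt (fun q : ℂ × ℂ => q.1 ^ 2) (p.1 • ContinuousLinearMap.fst ℝ ℂ ℂ
      + p.1 • ContinuousLinearMap.fst ℝ ℂ ℂ) p := by
    simpa [pow_two, Pi.mul_def] using hz.mul hz
  have hw2 : HasFDerivAt (fun q : ℂ × ℂ => q.2 ^ 2) (p.2 • ContinuousLinearMap.snd ℝ ℂ ℂ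
      + p.2 • ContinuousLinearMap.snd ℝ ℂ ℂ) p := by
    simpa [pow_two, Pi.mul_def] using hw.mul hw
  have hcz2 : HasFDerivAt (fun q : ℂ × ℂ => ((starRingEnd ℂ) q.1) ^ 2)
      (((starRingEnd ℂ) p.1) • ((Complex.conjCLE : ℂ →L[ℝ] ℂ).comp (ContinuousLinearMap.fst ℝ ℂ ℂ))
      + ((starRingEnd ℂ) p.1) • ((Complex.conjCLE : ℂ →L[ℝ] ℂ).comp
          (ContinuousLinearMap.fst ℝ ℂ ℂ))) p := by
    simpa [pow_two, Pi.mul_def] using hcz.mul hcz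
  have hcw2 : HasFDerivAt (fun q : ℂ × ℂ => ((starRingEnd ℂ) q.2) ^ 2)
      (((starRingEnd ℂ) p.2) • ((Complex.conjCLE : ℂ →L[ℝ] ℂ).comp (ContinuousLinearMap.snd ℝ ℂ ℂ))
      + ((starRingEnd ℂ) p.2) • ((Complex.conjCLE : ℂ →L[ℝ] ℂ).comp
          (ContinuousLinearMap.snd ℝ ℂ ℂ))) p := by
    simpa [pow_two, Pi.mul_def] using hcw.mul hcw
  have H0 : HasFDerivAt f₀ _ p :=
    hasFDerivAt_vecE3 hz2 ((hz.const_mul ((Real.sqrt 2 : ℂ))).mul hw) hw2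
  have H1 : HasFDerivAt f₁ _ p :=
    hasFDerivAt_vecE3 (((hz.const_mul ((Real.sqrt 2 : ℂ))).mul hcw).neg)
      ((hz.mul hcz).sub (hw.mul hcw)) ((hw.const_mul ((Real.sqrt 2 : ℂ))).mul hcz)
  have H2 : HasFDerivAt f₂ _ p :=
    hasFDerivAt_vecE3 hcw2 (((hcz.const_mul ((Real.sqrt 2 : ℂ))).mul hcw).neg) hcz2
  refine ⟨⟨?_, ?_, ?_⟩, ⟨?_, ?_, ?_⟩, ⟨?_, ?_, ?_⟩⟩
  · rw [H0.fderiv, pi3_apply]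
    simp only [f₀, f₁, f₂, smul_vecE3, sub_vecE3, add_vecE3]
    refine vecE3_congr ?_ ?_ ?_ <;>
      simp [ContinuousLinearMap.add_apply, ContinuousLinearMap.smul_apply,
        ContinuousLinearMap.comp_apply, ContinuousLinearMap.sub_apply,
        ContinuousLinearMap.neg_apply, smul_eq_mul, Complex.conjCLE_apply, _root_.map_mul,
        Complex.conj_I, map_neg] <;> ring_nf <;> simp only [h2] <;> (try ring_nf) <;> (try ring)
  · rw [H0.fderiv, pi3_apply]
    simp only [f₀, f₁, f₂, smul_vecE3, sub_vecE3, add_vecE3]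
    refine vecE3_congr ?_ ?_ ?_ <;>
      simp [ContinuousLinearMap.add_apply, ContinuousLinearMap.smul_apply,
        ContinuousLinearMap.comp_apply, ContinuousLinearMap.sub_apply,
        ContinuousLinearMap.neg_apply, smul_eq_mul, Complex.conjCLE_apply, _root_.map_mul,
        Complex.conj_I, map_neg] <;> ring_nf <;> simp only [h2] <;> (try ring_nf) <;> (try ring)
  · rw [H0.fderiv, pi3_apply]
    simp only [f₀, f₁, f₂, smul_vecE3, sub_vecE3, add_vecE3]
    refine vecE3_congr ?_ ?_ ?_ <;>
      simp [ContinuousLinearMap.add_apply, ContinuousLinearMap.smul_apply,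
        ContinuousLinearMap.comp_apply, ContinuousLinearMap.sub_apply,
        ContinuousLinearMap.neg_apply, smul_eq_mul, Complex.conjCLE_apply, _root_.map_mul,
        Complex.conj_I, map_neg] <;> ring_nf <;> simp only [h2] <;> (try ring_nf) <;> (try ring)
  · rw [H1.fderiv, pi3_apply, ← zero_vecE3]
    refine vecE3_congr ?_ ?_ ?_ <;>
      simp [ContinuousLinearMap.add_apply, ContinuousLinearMap.smul_apply,
        ContinuousLinearMap.comp_apply, ContinuousLinearMap.sub_apply,
        ContinuousLinearMap.neg_apply, smul_eq_mul, Complex.conjCLE_apply, _root_.map_mul,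
        Complex.conj_I, map_neg] <;> ring_nf <;> simp only [h2] <;> (try ring_nf) <;> (try ring)
  · rw [H1.fderiv, pi3_apply]
    simp only [f₀, f₁, f₂, smul_vecE3, sub_vecE3, add_vecE3]
    refine vecE3_congr ?_ ?_ ?_ <;>
      simp [ContinuousLinearMap.add_apply, ContinuousLinearMap.smul_apply,
        ContinuousLinearMap.comp_apply, ContinuousLinearMap.sub_apply,
        ContinuousLinearMap.neg_apply, smul_eq_mul, Complex.conjCLE_apply, _root_.map_mul,
        Complex.conj_I, map_neg] <;> ring_nf <;> simp only [h2] <;> (try ring_nf) <;> (try ring)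
  · rw [H1.fderiv, pi3_apply]
    simp only [f₀, f₁, f₂, smul_vecE3, sub_vecE3, add_vecE3]
    refine vecE3_congr ?_ ?_ ?_ <;>
      simp [ContinuousLinearMap.add_apply, ContinuousLinearMap.smul_apply,
        ContinuousLinearMap.comp_apply, ContinuousLinearMap.sub_apply,
        ContinuousLinearMap.neg_apply, smul_eq_mul, Complex.conjCLE_apply, _root_.map_mul,
        Complex.conj_I, map_neg] <;> ring_nf <;> simp only [h2] <;> (try ring_nf) <;> (try ring)
  · rw [H2.fderiv, pi3_apply]
    simp only [f₀, f₁, f₂, smul_vecE3, sub_vecE3, add_vecE3]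
    refine vecE3_congr ?_ ?_ ?_ <;>
      simp [ContinuousLinearMap.add_apply, ContinuousLinearMap.smul_apply,
        ContinuousLinearMap.comp_apply, ContinuousLinearMap.sub_apply,
        ContinuousLinearMap.neg_apply, smul_eq_mul, Complex.conjCLE_apply, _root_.map_mul,
        Complex.conj_I, map_neg] <;> ring_nf <;> simp only [h2] <;> (try ring_nf) <;> (try ring)
  · rw [H2.fderiv, pi3_apply]
    simp only [f₀, f₁, f₂, smul_vecE3, sub_vecE3, add_vecE3]
    refine vecE3_congr ?_ ?_ ?_ <;>
      simp [ContinuousLinearMap.add_apply, ContinuousLinearMap.smul_apply,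
        ContinuousLinearMap.comp_apply, ContinuousLinearMap.sub_apply,
        ContinuousLinearMap.neg_apply, smul_eq_mul, Complex.conjCLE_apply, _root_.map_mul,
        Complex.conj_I, map_neg] <;> ring_nf <;> simp only [h2] <;> (try ring_nf) <;> (try ring)
  · rw [H2.fderiv, pi3_apply]
    simp only [f₀, f₁, f₂, smul_vecE3, sub_vecE3, add_vecE3]
    refine vecE3_congr ?_ ?_ ?_ <;>
      simp [ContinuousLinearMap.add_apply, ContinuousLinearMap.smul_apply,
        ContinuousLinearMap.comp_apply, ContinuousLinearMap.sub_apply,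
        ContinuousLinearMap.neg_apply, smul_eq_mul, Complex.conjCLE_apply, _root_.map_mul,
        Complex.conj_I, map_neg] <;> ring_nf <;> simp only [h2] <;> (try ring_nf) <;> (try ring)
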